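/- arXiv:1404.5693 — 4 statements merged into one kernel-verified Lean document; each statement's English description precedes it below -/
import Mathlib

section
/- Let n ≥ 2 be an integer and let f : [0,∞) → [0,∞) be a nonincreasing (antitone) function. Then for every s ≥ 0, ( ∫₀^s f(t)^((n−1)/n) dt )^(n/(n−1)) ≥ (n/(n−1)) · ∫₀^s t^(1/(n−1)) f(t) dt. -/
open MeasureTheory

/-- Key integral inequality in the proof of the Federer–Fleming type inequality:
for a nonincreasing nonnegative `f` on `[0,∞)`, every integer `n ≥ 2` and every `s ≥ 0`,
`(∫₀^s f(t)^((n−1)/n) dt)^(n/(n−1)) ≥ (n/(n−1)) ∫₀^s t^(1/(n−1)) f(t) dt`. -/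
theorem integral_antitone_rpow_ineq (n : ℕ) (hn : 2 ≤ n) (f : ℝ → ℝ)
    (hf_nonneg : ∀ t : ℝ, 0 ≤ t → 0 ≤ f t)
    (hf_anti : AntitoneOn f (Set.Ici (0 : ℝ)))
    (s : ℝ) (hs : 0 ≤ s) :
    (∫ t in (0:ℝ)..s, (f t) ^ (((n : ℝ) - 1) / n)) ^ ((n : ℝ) / ((n : ℝ) - 1)) ≥
      ((n : ℝ) / ((n : ℝ) - 1)) * ∫ t in (0:ℝ)..s, t ^ (1 / ((n : ℝ) - 1)) * f t := by
  have hN2 : (2:ℝ) ≤ (n:ℝ) := by exact_mod_cast hn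
  set c : ℝ := ((n : ℝ) - 1) / n with hc_def
  set p : ℝ := (n : ℝ) / ((n : ℝ) - 1) with hp_def
  have hN0 : (0:ℝ) < (n:ℝ) := by linarith
  have hN1 : (0:ℝ) < (n:ℝ) - 1 := by linarith
  have hp1 : 1 ≤ p := by rw [hp_def, le_div_iff₀ hN1]; linarith
  have hp0 : (0:ℝ) < p := lt_of_lt_of_le one_pos hp1
  have hc0 : (0:ℝ) ≤ c := div_nonneg (by linarith) (by linarith)
  have hcp : c * p = 1 := by
    rw [hc_def, hp_def]; field_simp
  have hpm : 1 / ((n:ℝ) - 1) = p - 1 := by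
    rw [hp_def]; field_simp; ring
  -- the antitone extension of `f ^ c`
  set g : ℝ → ℝ := fun t => f (max t 0) ^ c with hg_def
  have hg_anti : Antitone g := by
    intro x y hxy
    exact Real.rpow_le_rpow (hf_nonneg _ (le_max_right _ _))
      (hf_anti (Set.mem_Ici.2 (le_max_right _ _)) (Set.mem_Ici.2 (le_max_right _ _))
        (max_le_max hxy le_rfl)) hc0
  have hg_nonneg : ∀ t, 0 ≤ g t := fun t => Real.rpow_nonneg (hf_nonneg _ (le_max_right _ _)) _
  -- right limits of `g`
  set G : ℝ → ℝ := fun x => Function.rightLim g x with hG_def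
  have hG_tendsto : ∀ x : ℝ, Filter.Tendsto g (nhdsWithin x (Set.Ioi x)) (nhds (G x)) :=
    fun x => hg_anti.tendsto_rightLim x
  have hG_le : ∀ x, G x ≤ g x := fun x => hg_anti.rightLim_le le_rfl
  have hG_nonneg : ∀ x, 0 ≤ G x := fun x =>
    ge_of_tendsto (hG_tendsto x) (Filter.Eventually.of_forall (fun t => hg_nonneg t))
  have hG_anti : Antitone G := hg_anti.rightLim
  have hgInt : ∀ a b : ℝ, IntervalIntegrable g volume a b := fun a b =>
    hg_anti.intervalIntegrable
  -- the primitive of `g`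
  set F : ℝ → ℝ := fun t => ∫ x in (0:ℝ)..t, g x with hF_def
  have hLHS : (∫ t in (0:ℝ)..s, f t ^ c) = F s := by
    refine intervalIntegral.integral_congr ?_
    intro t ht
    rw [Set.uIcc_of_le hs] at ht
    simp only [hg_def, max_eq_left ht.1]
  -- the integrand on the right agrees a.e. with `t ^ (p-1) * (G t) ^ p`
  set ψ : ℝ → ℝ := fun x => x ^ (1 / ((n:ℝ) - 1)) * G x ^ p with hψ_def
  have hD : Set.Countable {x : ℝ | ¬ContinuousAt g x} := hg_anti.countable_not_continuousAt
  have hRHS : (∫ t in (0:ℝ)..s, t ^ (1 / ((n:ℝ) - 1)) * f t) = ∫ t in (0:ℝ)..s, ψ t := by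
    refine intervalIntegral.integral_congr_ae ?_
    filter_upwards [hD.ae_notMem volume] with x hx hmem
    have hx0 : 0 < x := by
      rw [Set.uIoc_of_le hs] at hmem
      exact hmem.1
    have hcont : ContinuousAt g x := not_not.mp hx
    have hGg : G x = g x :=
      tendsto_nhds_unique (hG_tendsto x) (hcont.tendsto.mono_left nhdsWithin_le_nhds)
    have : G x ^ p = f x := by
      rw [hGg, hg_def]
      simp only [max_eq_left hx0.le]
      rw [← Real.rpow_mul (hf_nonneg x hx0.le) c p, hcp, Real.rpow_one]
    simp only [hψ_def]
    rw [this]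
  -- integrability of `ψ`
  have hGp_anti : Antitone (fun x => G x ^ p) := fun x y h =>
    Real.rpow_le_rpow (hG_nonneg y) (hG_anti h) hp0.le
  have hψInt : IntervalIntegrable ψ volume 0 s := by
    refine IntervalIntegrable.continuousOn_mul (hGp_anti.intervalIntegrable) ?_
    intro x _
    exact (Real.continuousAt_rpow_const x _ (Or.inr (by positivity))).continuousWithinAt
  have hψIntOn : IntegrableOn ψ (Set.Icc 0 s) :=
    (intervalIntegrable_iff_integrableOn_Icc_of_le hs).mp hψInt
  -- continuity of `B = F ^ p` on `[0, s]`
  have hFcont : ContinuousOn F (Set.Icc 0 s) := by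
    have h1 : IntegrableOn g (Set.uIcc 0 s) := by
      rw [Set.uIcc_of_le hs]
      exact (intervalIntegrable_iff_integrableOn_Icc_of_le hs).mp (hgInt 0 s)
    have := intervalIntegral.continuousOn_primitive_interval h1
    rwa [Set.uIcc_of_le hs] at this
  set B : ℝ → ℝ := fun t => F t ^ p with hB_def
  have hBcont : ContinuousOn B (Set.Icc 0 s) :=
    hFcont.rpow_const (fun x _ => Or.inr hp0.le)
  -- derivative of `B` from the right
  have hFderiv : ∀ x ∈ Set.Ioo (0:ℝ) s, HasDerivWithinAt F (G x) (Set.Ioi x) x := by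
    intro x _
    have h := intervalIntegral.integral_hasDerivWithinAt_of_tendsto_ae_right
      (f := g) (hgInt 0 x) (s := Set.Ici x) (t := Set.Ioi x)
      ⟨Set.univ, Filter.univ_mem, hg_anti.measurable.aestronglyMeasurable⟩
      ((hG_tendsto x).mono_left inf_le_left)
    exact h.mono Set.Ioi_subset_Ici_self
  have hBderiv : ∀ x ∈ Set.Ioo (0:ℝ) s,
      HasDerivWithinAt B (G x * p * F x ^ (p - 1)) (Set.Ioi x) x := fun x hx =>
    (hFderiv x hx).rpow_const (Or.inr hp1)
  -- pointwise inequality between `p * ψ` and the derivative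
  have key : ∀ x ∈ Set.Ioo (0:ℝ) s, p * ψ x ≤ G x * p * F x ^ (p - 1) := by
    intro x hx
    have hxG : x * G x ≤ F x := by
      have h1 : (∫ _t in (0:ℝ)..x, G x) ≤ F x := by
        refine intervalIntegral.integral_mono_on hx.1.le intervalIntegrable_const (hgInt 0 x) ?_
        intro t ht
        exact le_trans (hG_le x) (hg_anti ht.2)
      rw [intervalIntegral.integral_const, smul_eq_mul, sub_zero] at h1
      linarith [h1]
    rcases eq_or_lt_of_le (hG_nonneg x) with h0 | h0
    · simp only [hψ_def, ← h0, Real.zero_rpow hp0.ne', mul_zero, zero_mul]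
      exact le_rfl
    · have hxGpos : 0 < x * G x := mul_pos hx.1 h0
      have hsplit : G x ^ p = G x ^ (p - 1) * G x := by
        have h := Real.rpow_add h0 (p - 1) 1
        rw [Real.rpow_one] at h
        calc G x ^ p = G x ^ (p - 1 + 1) := by norm_num
          _ = G x ^ (p - 1) * G x := h
      have hmul : x ^ (p - 1) * G x ^ (p - 1) = (x * G x) ^ (p - 1) :=
        (Real.mul_rpow hx.1.le h0.le).symm
      have hle : (x * G x) ^ (p - 1) ≤ F x ^ (p - 1) :=
        Real.rpow_le_rpow hxGpos.le hxG (by linarith)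
      have : ψ x ≤ F x ^ (p - 1) * G x := by
        simp only [hψ_def]
        rw [hpm, hsplit, ← mul_assoc, hmul]
        exact mul_le_mul_of_nonneg_right hle h0.le
      calc p * ψ x ≤ p * (F x ^ (p - 1) * G x) := by
            exact mul_le_mul_of_nonneg_left this hp0.le
        _ = G x * p * F x ^ (p - 1) := by ring
  -- main application of FTC-type inequality
  have main : (∫ y in (0:ℝ)..s, p * ψ y) ≤ B s - B 0 :=
    intervalIntegral.integral_le_sub_of_hasDeriv_right_of_le hs hBcont hBderiv
      (hψIntOn.const_mul p) key
  have hB0 : B 0 = 0 := by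
    simp only [hB_def, hF_def, intervalIntegral.integral_same]
    exact Real.zero_rpow hp0.ne'
  rw [ge_iff_le, hLHS, hRHS]
  have hconst : (∫ y in (0:ℝ)..s, p * ψ y) = p * ∫ y in (0:ℝ)..s, ψ y :=
    intervalIntegral.integral_const_mul p ψ
  rw [hB0, sub_zero] at main
  rw [← hconst]
  exact main
end

section
/- Let n ≥ 2, let F be the Funk metric on the open unit ball of ℝⁿ, and let 0 < r < 1. Then the uniformity constant of F restricted to the closed ball {|x| ≤ r} equals ((1+r)/(1−r))²; that is, the supremum of g_{(x,X)}(Y,Y) / g_{(x,Z)}(Y,Y) over all x with |x| ≤ r and all X, Y, Z ∈ ℝⁿ \ {0} with F(x,X) = F(x,Y) = F(x,Z) = 1 equals ((1+r)/(1−r))². -/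
set_option maxHeartbeats 1000000

open Topology

/-- The Funk metric on the open unit ball of `ℝⁿ`. -/
noncomputable def funk (n : ℕ) (x y : EuclideanSpace ℝ (Fin n)) : ℝ :=
  (Real.sqrt ((1 - ‖x‖ ^ 2) * ‖y‖ ^ 2 + (inner ℝ x y : ℝ) ^ 2) + (inner ℝ x y : ℝ)) /
    (1 - ‖x‖ ^ 2)

/-- The fundamental tensor of the Funk metric:
`g_{(x,y)}(u,v) = (1/2)·D²(F(x,·)²)(y)[u,v]`. -/
noncomputable def funkG (n : ℕ) (x y u v : EuclideanSpace ℝ (Fin n)) : ℝ :=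
  (1 / 2) * (fderiv ℝ (fun z => (fderiv ℝ (fun w => (funk n x w) ^ 2) z) v) y) u



lemma aux_lo (b m t w : ℝ) (hb0 : 0 ≤ b) (hb1 : b ≤ 1) (hw : w^2 ≤ b^2*m^2) (ht : t^2 ≤ m^2) :
    (1-b)^2*m^2 ≤ (t+w)^2 + (1-b)*(m^2 - t^2) := by
  rcases eq_or_lt_of_le hb0 with hb | hb
  · have hb' : b = 0 := hb.symm
    subst hb'
    have hw0 : w = 0 := sq_eq_zero_iff.1 (le_antisymm (by nlinarith) (sq_nonneg w))
    subst hw0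
    nlinarith [ht]
  · nlinarith [sq_nonneg (b*t + w),
      mul_nonneg (by linarith : (0:ℝ) ≤ 1-b) (sub_nonneg.2 hw), hb]

lemma aux_up (b m t w : ℝ) (hb0 : 0 ≤ b) (hw : w^2 ≤ b^2*m^2) (ht : t^2 ≤ m^2) :
    (t+w)^2 + (1+b)*(m^2 - t^2) ≤ (1+b)^2*m^2 := by
  rcases eq_or_lt_of_le hb0 with hb | hb
  · have hb' : b = 0 := hb.symm
    subst hb'
    have hw0 : w = 0 := sq_eq_zero_iff.1 (le_antisymm (by nlinarith) (sq_nonneg w))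
    subst hw0
    nlinarith [ht]
  · nlinarith [sq_nonneg (b*t - w),
      mul_nonneg (by linarith : (0:ℝ) ≤ 1+b) (sub_nonneg.2 hw), hb]

lemma scalar_core (b A P M p w k q : ℝ)
    (hb0 : 0 ≤ b) (hb1 : b < 1) (hA : A = 1 - b^2)
    (hP : 0 < P) (hM : 0 < M)
    (hq2 : q^2 = A*P + p^2) (hq0 : 0 < q)
    (hqp : q + p = A)
    (hm2 : A*M + w^2 = (A-w)^2) (hm0 : 0 ≤ A - w)
    (hp2 : p^2 ≤ b^2*P) (hw2 : w^2 ≤ b^2*M) (hk2 : k^2 ≤ P*M) :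
    0 < A - w ∧
    (1-b)^2*(A-w)^2 ≤ (((A*k+p*w)/q + w)^2 + ((q+p)/q) * (A*M + w^2 - ((A*k+p*w)/q)^2)) ∧
    (((A*k+p*w)/q + w)^2 + ((q+p)/q) * (A*M + w^2 - ((A*k+p*w)/q)^2)) ≤ (1+b)^2*(A-w)^2 := by
  have hA0 : 0 < A := by nlinarith
  have hsq : 0 < (A-w)^2 := by nlinarith [mul_pos hA0 hM, sq_nonneg w]
  have hm : 0 < A - w := hm0.lt_of_ne (fun h => by rw [← h] at hsq; norm_num at hsq)
  have hwb : w^2 ≤ b^2*(A-w)^2 := by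
    nlinarith [mul_nonneg (by nlinarith : (0:ℝ) ≤ 1-b^2) (by linarith [hw2] : (0:ℝ) ≤ b^2*M - w^2)]
  have hqA : q = A - p := by linarith
  have hP' : P = A - 2*p := by
    have e1 : A*(A - 2*p) = A*P := by nlinarith [hq2]
    have := mul_left_cancel₀ hA0.ne' e1
    linarith
  have hp2' : p^2 ≤ b^2*(A - 2*p) := hP' ▸ hp2
  have hpb : (p + b^2)^2 ≤ b^2 := by nlinarith [hp2']
  have hq_le : q ≤ 1 + b := by nlinarith [hpb]
  have hq_ge : 1 - b ≤ q := by nlinarith [hpb]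
  have hPw : 0 ≤ P*w^2 - 2*k*p*w + M*p^2 := by
    nlinarith [sq_nonneg (P*w - k*p), mul_nonneg (sub_nonneg.2 hk2) (sq_nonneg p), hP]
  have hT2' : (A*k+p*w)^2 ≤ q^2 * (A-w)^2 := by
    rw [hq2, ← hm2]
    nlinarith [mul_nonneg (sq_nonneg A) (sub_nonneg.2 hk2), mul_nonneg hA0.le hPw]
  set t := (A*k+p*w)/q with hts
  have ht2 : t^2 ≤ (A-w)^2 := by
    rw [hts, div_pow, div_le_iff₀ (by positivity : (0:ℝ) < q^2)]
    nlinarith [hT2']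
  have hfrac : (q+p)/q = A/q := by rw [hqp]
  have hAq_le : A/q ≤ 1+b := by
    rw [div_le_iff₀ hq0]; nlinarith
  have hAq_ge : 1-b ≤ A/q := by
    rw [le_div_iff₀ hq0]; nlinarith
  refine ⟨hm, ?_, ?_⟩
  · rw [hfrac, hm2]
    have step : (t+w)^2 + (1-b)*((A-w)^2 - t^2) ≤ (t+w)^2 + (A/q)*((A-w)^2 - t^2) := by
      have hD := sub_nonneg.2 ht2
      have := mul_le_mul_of_nonneg_right hAq_ge hD
      linarith
    exact le_trans (aux_lo b (A-w) t w hb0 hb1.le hwb ht2) step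
  · rw [hfrac, hm2]
    have step : (t+w)^2 + (A/q)*((A-w)^2 - t^2) ≤ (t+w)^2 + (1+b)*((A-w)^2 - t^2) := by
      have hD := sub_nonneg.2 ht2
      have := mul_le_mul_of_nonneg_right hAq_le hD
      linarith
    exact le_trans step (aux_up b (A-w) t w hb0 hwb ht2)

lemma funk_fderiv_apply (n : ℕ) (x : EuclideanSpace ℝ (Fin n)) (hx : ‖x‖ < 1)
    (z : EuclideanSpace ℝ (Fin n)) (hz : z ≠ 0) (v : EuclideanSpace ℝ (Fin n)) :
    fderiv ℝ (fun w => funk n x w ^ 2) z v =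
      (2 * (Real.sqrt ((1 - ‖x‖^2) * ‖z‖^2 + (inner ℝ x z : ℝ)^2) + (inner ℝ x z : ℝ)) / (1-‖x‖^2)^2) *
        (((1-‖x‖^2) * (inner ℝ z v : ℝ) + (inner ℝ x z : ℝ) * (inner ℝ x v : ℝ)) /
            Real.sqrt ((1 - ‖x‖^2) * ‖z‖^2 + (inner ℝ x z : ℝ)^2) + (inner ℝ x v : ℝ)) := by
  have hA : 0 < 1 - ‖x‖^2 := by nlinarith [norm_nonneg x]
  have hz' : 0 < ‖z‖ := norm_pos_iff.2 hz
  have hQ : 0 < (1-‖x‖^2) * ‖z‖^2 + (inner ℝ x z : ℝ) * (inner ℝ x z : ℝ) := by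
    have := mul_pos hA (pow_pos hz' 2)
    nlinarith [mul_self_nonneg (inner ℝ x z : ℝ)]
  have h1 : HasFDerivAt (fun w : EuclideanSpace ℝ (Fin n) => ‖w‖^2) (2 • innerSL ℝ z) z :=
    (hasStrictFDerivAt_norm_sq z).hasFDerivAt
  have h2 : HasFDerivAt (fun w : EuclideanSpace ℝ (Fin n) => (inner ℝ x w : ℝ)) (innerSL ℝ x) z :=
    (innerSL ℝ x).hasFDerivAt
  have hQd := (h1.const_mul (1-‖x‖^2)).add (h2.mul h2)
  have hsq := hQd.sqrt hQ.ne'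
  have hG := hsq.add h2
  have hF2' := (hG.mul hG).mul_const ((1-‖x‖^2)^2)⁻¹
  have hF2 : HasFDerivAt (fun w => funk n x w ^ 2) _ z := hF2'.congr_of_eventuallyEq <| by
    apply Filter.Eventually.of_forall
    intro w
    simp only [funk, pow_two, Pi.add_apply, Pi.mul_apply]
    rw [div_mul_div_comm]
    ring_nf
  rw [hF2.fderiv]
  have hs : Real.sqrt ((1-‖x‖^2)*‖z‖^2 + (inner ℝ x z : ℝ) * (inner ℝ x z : ℝ)) ≠ 0 :=
    (Real.sqrt_pos.2 hQ).ne'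
  simp only [ContinuousLinearMap.add_apply, ContinuousLinearMap.smul_apply, innerSL_apply_apply,
    smul_eq_mul, ContinuousLinearMap.coe_smul', Pi.smul_apply, nsmul_eq_mul, Nat.cast_ofNat, Pi.add_apply, Pi.mul_apply]
  rw [pow_two (inner ℝ x z : ℝ)]
  field_simp
  ring

lemma funkG_formula (n : ℕ) (x X Y : EuclideanSpace ℝ (Fin n)) (hx : ‖x‖ < 1) (hX : X ≠ 0)
    (q T : ℝ)
    (hq : q = Real.sqrt ((1-‖x‖^2)*‖X‖^2 + (inner ℝ x X : ℝ)^2))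
    (hT : T = ((1-‖x‖^2)*(inner ℝ X Y : ℝ) + (inner ℝ x X : ℝ)*(inner ℝ x Y : ℝ))/q) :
    funkG n x X Y Y = (1/(1-‖x‖^2)^2) *
      ((T + (inner ℝ x Y : ℝ))^2 +
        ((q + (inner ℝ x X : ℝ))/q) * ((1-‖x‖^2)*‖Y‖^2 + (inner ℝ x Y : ℝ)^2 - T^2)) := by
  have hA : 0 < 1 - ‖x‖^2 := by nlinarith [norm_nonneg x]
  have hX' : 0 < ‖X‖ := norm_pos_iff.2 hX
  have hQ : 0 < (1-‖x‖^2) * ‖X‖^2 + (inner ℝ x X : ℝ) * (inner ℝ x X : ℝ) := by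
    have := mul_pos hA (pow_pos hX' 2)
    nlinarith [mul_self_nonneg (inner ℝ x X : ℝ)]
  have hq0 : 0 < q := by
    rw [hq]; apply Real.sqrt_pos.2; rw [pow_two (inner ℝ x X : ℝ)]; exact hQ
  have hsf : Real.sqrt ((1-‖x‖^2)*‖X‖^2 + (inner ℝ x X : ℝ)*(inner ℝ x X : ℝ)) = q := by
    rw [hq, pow_two (inner ℝ x X : ℝ)]
  -- the function φ, in differentiation-friendly form
  have heq : (fun z => fderiv ℝ (fun w => funk n x w ^ 2) z Y) =ᶠ[𝓝 X]
      (fun z => ((2 * ((1-‖x‖^2)^2)⁻¹) *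
        (Real.sqrt ((1-‖x‖^2)*‖z‖^2 + (inner ℝ x z : ℝ)*(inner ℝ x z : ℝ)) + (inner ℝ x z : ℝ))) *
        (((1-‖x‖^2) * (inner ℝ Y z : ℝ) + (inner ℝ x z : ℝ) * (inner ℝ x Y : ℝ)) *
          (Real.sqrt ((1-‖x‖^2)*‖z‖^2 + (inner ℝ x z : ℝ)*(inner ℝ x z : ℝ)))⁻¹ + (inner ℝ x Y : ℝ))) := by
    have hmem : {z : EuclideanSpace ℝ (Fin n) | z ≠ 0} ∈ 𝓝 X := isOpen_ne.mem_nhds hX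
    filter_upwards [hmem] with z hz
    rw [funk_fderiv_apply n x hx z hz Y]
    rw [pow_two (inner ℝ x z : ℝ), real_inner_comm Y z, div_eq_mul_inv, div_eq_mul_inv]
    ring
  -- differentiate φ at X
  have h1 : HasFDerivAt (fun w : EuclideanSpace ℝ (Fin n) => ‖w‖^2) (2 • innerSL ℝ X) X :=
    (hasStrictFDerivAt_norm_sq X).hasFDerivAt
  have h2 : HasFDerivAt (fun w : EuclideanSpace ℝ (Fin n) => (inner ℝ x w : ℝ)) (innerSL ℝ x) X :=
    (innerSL ℝ x).hasFDerivAt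
  have h3 : HasFDerivAt (fun w : EuclideanSpace ℝ (Fin n) => (inner ℝ Y w : ℝ)) (innerSL ℝ Y) X :=
    (innerSL ℝ Y).hasFDerivAt
  have hQd := (h1.const_mul (1-‖x‖^2)).add (h2.mul h2)
  have hsq := hQd.sqrt hQ.ne'
  have hG := hsq.add h2
  have hinv := (hasDerivAt_inv (Real.sqrt_pos.2 hQ).ne').comp_hasFDerivAt X hsq
  have hN := (h3.const_mul (1-‖x‖^2)).add (h2.mul_const (inner ℝ x Y : ℝ))
  have hg := ((hN.mul hinv).add_const (inner ℝ x Y : ℝ))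
  have hf := hG.const_mul (2 * ((1-‖x‖^2)^2)⁻¹)
  have hphi : HasFDerivAt (fun z : EuclideanSpace ℝ (Fin n) =>
      ((2 * ((1-‖x‖^2)^2)⁻¹) *
        (Real.sqrt ((1-‖x‖^2)*‖z‖^2 + (inner ℝ x z : ℝ)*(inner ℝ x z : ℝ)) + (inner ℝ x z : ℝ))) *
        (((1-‖x‖^2) * (inner ℝ Y z : ℝ) + (inner ℝ x z : ℝ) * (inner ℝ x Y : ℝ)) *
          (Real.sqrt ((1-‖x‖^2)*‖z‖^2 + (inner ℝ x z : ℝ)*(inner ℝ x z : ℝ)))⁻¹ + (inner ℝ x Y : ℝ))) _ X :=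
    hf.mul hg
  have hfd := hphi.fderiv
  rw [funkG, heq.fderiv_eq, hfd]
  have hsne : Real.sqrt ((1-‖x‖^2)*‖X‖^2 + (inner ℝ x X : ℝ)*(inner ℝ x X : ℝ)) ≠ 0 :=
    (Real.sqrt_pos.2 hQ).ne'
  simp only [ContinuousLinearMap.add_apply, ContinuousLinearMap.smul_apply, innerSL_apply_apply,
    smul_eq_mul, ContinuousLinearMap.coe_smul', Pi.smul_apply, nsmul_eq_mul, Nat.cast_ofNat,
    Function.comp_apply, Pi.add_apply, Pi.mul_apply]
  rw [hsf, real_inner_comm Y X, real_inner_self_eq_norm_sq Y, hT]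
  simp only [real_inner_comm Y X]
  set p1 := (inner ℝ x X : ℝ) with hp1
  set k1 := (inner ℝ X Y : ℝ) with hk1
  set w1 := (inner ℝ x Y : ℝ) with hw1
  field_simp
  ring

lemma funkG_bounds (n : ℕ) (x W Y : EuclideanSpace ℝ (Fin n)) (hx : ‖x‖ < 1)
    (hW : W ≠ 0) (hY : Y ≠ 0) (hFW : funk n x W = 1) (hFY : funk n x Y = 1) :
    0 < 1 - ‖x‖^2 - (inner ℝ x Y : ℝ) ∧
    (1-‖x‖)^2*(1-‖x‖^2-(inner ℝ x Y : ℝ))^2 ≤ (1-‖x‖^2)^2 * funkG n x W Y Y ∧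
    (1-‖x‖^2)^2 * funkG n x W Y Y ≤ (1+‖x‖)^2*(1-‖x‖^2-(inner ℝ x Y : ℝ))^2 := by
  have hb0 : (0:ℝ) ≤ ‖x‖ := norm_nonneg x
  have hA0 : 0 < 1 - ‖x‖^2 := by nlinarith
  have hW' : 0 < ‖W‖ := norm_pos_iff.2 hW
  have hY' : 0 < ‖Y‖ := norm_pos_iff.2 hY
  have hQW : 0 < (1-‖x‖^2) * ‖W‖^2 + (inner ℝ x W : ℝ)^2 := by
    have := mul_pos hA0 (pow_pos hW' 2); nlinarith [sq_nonneg (inner ℝ x W : ℝ)]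
  have hQY : 0 < (1-‖x‖^2) * ‖Y‖^2 + (inner ℝ x Y : ℝ)^2 := by
    have := mul_pos hA0 (pow_pos hY' 2); nlinarith [sq_nonneg (inner ℝ x Y : ℝ)]
  set q := Real.sqrt ((1-‖x‖^2) * ‖W‖^2 + (inner ℝ x W : ℝ)^2) with hqdef
  have hq0 : 0 < q := Real.sqrt_pos.2 hQW
  have hq2 : q^2 = (1-‖x‖^2) * ‖W‖^2 + (inner ℝ x W : ℝ)^2 := Real.sq_sqrt hQW.le
  have hqp : q + (inner ℝ x W : ℝ) = 1 - ‖x‖^2 := by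
    have h := hFW
    rw [funk, div_eq_one_iff_eq hA0.ne'] at h
    exact h
  have hYs : Real.sqrt ((1-‖x‖^2) * ‖Y‖^2 + (inner ℝ x Y : ℝ)^2)
      = 1 - ‖x‖^2 - (inner ℝ x Y : ℝ) := by
    have h := hFY
    rw [funk, div_eq_one_iff_eq hA0.ne'] at h
    linarith
  have hm2 : (1-‖x‖^2) * ‖Y‖^2 + (inner ℝ x Y : ℝ)^2
      = ((1-‖x‖^2) - (inner ℝ x Y : ℝ))^2 := by
    have := Real.sq_sqrt hQY.le
    rw [hYs] at this
    linarith [this]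
  have hm0 : 0 ≤ (1-‖x‖^2) - (inner ℝ x Y : ℝ) := by
    rw [← hYs]; exact Real.sqrt_nonneg _
  have hp2 : (inner ℝ x W : ℝ)^2 ≤ ‖x‖^2 * ‖W‖^2 := by
    have := real_inner_mul_inner_self_le x W
    rw [real_inner_self_eq_norm_sq, real_inner_self_eq_norm_sq] at this
    nlinarith [this]
  have hw2 : (inner ℝ x Y : ℝ)^2 ≤ ‖x‖^2 * ‖Y‖^2 := by
    have := real_inner_mul_inner_self_le x Y
    rw [real_inner_self_eq_norm_sq, real_inner_self_eq_norm_sq] at this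
    nlinarith [this]
  have hk2 : (inner ℝ W Y : ℝ)^2 ≤ ‖W‖^2 * ‖Y‖^2 := by
    have := real_inner_mul_inner_self_le W Y
    rw [real_inner_self_eq_norm_sq, real_inner_self_eq_norm_sq] at this
    nlinarith [this]
  obtain ⟨h1, h2, h3⟩ := scalar_core ‖x‖ (1-‖x‖^2) (‖W‖^2) (‖Y‖^2)
    (inner ℝ x W : ℝ) (inner ℝ x Y : ℝ) (inner ℝ W Y : ℝ) q
    hb0 hx rfl (pow_pos hW' 2) (pow_pos hY' 2) hq2 hq0 hqp hm2 hm0 hp2 hw2 hk2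
  have hform := funkG_formula n x W Y hx hW q
    (((1-‖x‖^2)*(inner ℝ W Y : ℝ) + (inner ℝ x W : ℝ)*(inner ℝ x Y : ℝ))/q) hqdef rfl
  rw [hform]
  have hA2 : (0:ℝ) < (1-‖x‖^2)^2 := by positivity
  have hcancel : ∀ s : ℝ, (1-‖x‖^2)^2 * (1/(1-‖x‖^2)^2 * s) = s := fun s => by
    field_simp
  rw [hcancel]
  exact ⟨h1, h2, h3⟩

/-- The uniformity constant of the Funk metric on the closed ball of radius `r` equals
`((1+r)/(1−r))²`: the supremum of `g_{(x,X)}(Y,Y)/g_{(x,Z)}(Y,Y)` over `|x| ≤ r` and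
`F`-unit vectors `X, Y, Z` equals `((1+r)/(1−r))²`. -/
theorem funk_uniformity_constant (n : ℕ) (hn : 2 ≤ n) (r : ℝ) (hr0 : 0 < r) (hr1 : r < 1) :
    IsLUB { t : ℝ | ∃ x X Y Z : EuclideanSpace ℝ (Fin n),
        ‖x‖ ≤ r ∧ X ≠ 0 ∧ Y ≠ 0 ∧ Z ≠ 0 ∧
        funk n x X = 1 ∧ funk n x Y = 1 ∧ funk n x Z = 1 ∧
        t = funkG n x X Y Y / funkG n x Z Y Y }
      (((1 + r) / (1 - r)) ^ 2) := by
  constructor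
  · -- upper bound
    rintro t ⟨x, X, Y, Z, hxr, hX0, hY0, hZ0, hFX, hFY, hFZ, rfl⟩
    have hx1 : ‖x‖ < 1 := lt_of_le_of_lt hxr hr1
    have hb0 : (0:ℝ) ≤ ‖x‖ := norm_nonneg x
    obtain ⟨hm, hXlo, hXhi⟩ := funkG_bounds n x X Y hx1 hX0 hY0 hFX hFY
    obtain ⟨-, hZlo, hZhi⟩ := funkG_bounds n x Z Y hx1 hZ0 hY0 hFZ hFY
    have hA2 : (0:ℝ) < (1-‖x‖^2)^2 := by nlinarith
    have hb1 : (0:ℝ) < 1 - ‖x‖ := by linarith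
    have hmsq : (0:ℝ) < (1-‖x‖^2-(inner ℝ x Y : ℝ))^2 := by positivity
    have hZpos : 0 < funkG n x Z Y Y := by nlinarith [mul_pos (mul_pos hb1 hb1) hmsq]
    rw [div_le_iff₀ hZpos]
    have hstep : funkG n x X Y Y ≤ ((1+‖x‖)/(1-‖x‖))^2 * funkG n x Z Y Y := by
      rw [div_pow, div_mul_eq_mul_div, le_div_iff₀ (by positivity : (0:ℝ) < (1-‖x‖)^2)]
      nlinarith [mul_le_mul_of_nonneg_left hXhi (sq_nonneg (1-‖x‖)),
        mul_le_mul_of_nonneg_left hZlo (sq_nonneg (1+‖x‖)), hA2, hZpos]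
    refine le_trans hstep ?_
    have hmono : ((1+‖x‖)/(1-‖x‖))^2 ≤ ((1+r)/(1-r))^2 := by
      have h1 : (1+‖x‖)/(1-‖x‖) ≤ (1+r)/(1-r) := by
        rw [div_le_div_iff₀ hb1 (by linarith)]
        nlinarith
      have h2 : (0:ℝ) ≤ (1+‖x‖)/(1-‖x‖) := by positivity
      nlinarith [h1, h2]
    exact mul_le_mul_of_nonneg_right hmono hZpos.le
  · -- least upper bound: the value is attained
    intro c hc
    have h0n : 0 < n := by omega
    set i0 : Fin n := ⟨0, h0n⟩
    set e : EuclideanSpace ℝ (Fin n) := EuclideanSpace.single i0 (1:ℝ) with hedef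
    have he : ‖e‖ = 1 := by rw [hedef, EuclideanSpace.norm_single]; norm_num
    have he0 : e ≠ 0 := by
      intro h; rw [h, norm_zero] at he; norm_num at he
    have hiee : (inner ℝ e e : ℝ) = 1 := by
      rw [real_inner_self_eq_norm_sq, he]; norm_num
    have hi : ∀ a c : ℝ, (inner ℝ (a • e) (c • e) : ℝ) = a * c := by
      intro a c
      rw [real_inner_smul_left, real_inner_smul_right, hiee]; ring
    have hnsm : ∀ a : ℝ, ‖a • e‖^2 = a^2 := by
      intro a; rw [norm_smul, he, mul_one, Real.norm_eq_abs, sq_abs]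
    set x : EuclideanSpace ℝ (Fin n) := r • e with hxdef
    set X : EuclideanSpace ℝ (Fin n) := (1-r) • e with hXdef
    set Z : EuclideanSpace ℝ (Fin n) := (-(1+r)) • e with hZdef
    have hxn : ‖x‖ = r := by
      rw [hxdef, norm_smul, he, mul_one, Real.norm_eq_abs, abs_of_pos hr0]
    have hx1 : ‖x‖ < 1 := by rw [hxn]; exact hr1
    have hA0 : (0:ℝ) < 1 - r^2 := by nlinarith
    have hX0 : X ≠ 0 := smul_ne_zero (by linarith) he0
    have hZ0 : Z ≠ 0 := smul_ne_zero (by linarith) he0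
    have hiXX : (inner ℝ x X : ℝ) = r*(1-r) := hi r (1-r)
    have hiXZ : (inner ℝ x Z : ℝ) = -(r*(1+r)) := by rw [hxdef, hZdef, hi]; ring
    have hFX : funk n x X = 1 := by
      rw [funk, hxn, hXdef, hnsm, ← hXdef, hiXX]
      rw [show (1-r^2)*(1-r)^2 + (r*(1-r))^2 = (1-r)^2 by ring,
        Real.sqrt_sq (by linarith)]
      rw [div_eq_one_iff_eq hA0.ne']; ring
    have hFZ : funk n x Z = 1 := by
      rw [funk, hxn, hZdef, hnsm, ← hZdef, hiXZ]
      rw [show (1-r^2)*(-(1+r))^2 + (-(r*(1+r)))^2 = (1+r)^2 by ring,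
        Real.sqrt_sq (by linarith)]
      rw [div_eq_one_iff_eq hA0.ne']; ring
    have hgX : funkG n x X X X = 1 := by
      have hq : (1-r) = Real.sqrt ((1-‖x‖^2)*‖X‖^2 + (inner ℝ x X : ℝ)^2) := by
        rw [hxn, hXdef, hnsm, ← hXdef, hiXX,
          show (1-r^2)*(1-r)^2 + (r*(1-r))^2 = (1-r)^2 by ring,
          Real.sqrt_sq (by linarith)]
      have hiXXX : (inner ℝ X X : ℝ) = (1-r)*(1-r) := hi (1-r) (1-r)
      have hT : (1-r) = ((1-‖x‖^2)*(inner ℝ X X : ℝ) + (inner ℝ x X : ℝ)*(inner ℝ x X : ℝ))/(1-r) := by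
        rw [hxn, hiXXX, hiXX]
        rw [eq_div_iff (by linarith : (1:ℝ)-r ≠ 0)]; ring
      rw [funkG_formula n x X X hx1 hX0 (1-r) (1-r) hq hT, hxn, hXdef, hnsm, ← hXdef, hiXX]
      have h1r : ((1:ℝ)-r) ≠ 0 := by linarith
      field_simp
      ring
    have hgZ : funkG n x Z X X = ((1-r)/(1+r))^2 := by
      have hq : (1+r) = Real.sqrt ((1-‖x‖^2)*‖Z‖^2 + (inner ℝ x Z : ℝ)^2) := by
        rw [hxn, hZdef, hnsm, ← hZdef, hiXZ,
          show (1-r^2)*(-(1+r))^2 + (-(r*(1+r)))^2 = (1+r)^2 by ring,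
          Real.sqrt_sq (by linarith)]
      have hiZX : (inner ℝ Z X : ℝ) = -((1+r)*(1-r)) := by rw [hZdef, hXdef, hi]; ring
      have hT : -(1-r) = ((1-‖x‖^2)*(inner ℝ Z X : ℝ) + (inner ℝ x Z : ℝ)*(inner ℝ x X : ℝ))/(1+r) := by
        rw [hxn, hiZX, hiXZ, hiXX]
        rw [eq_div_iff (by linarith : (1:ℝ)+r ≠ 0)]; ring
      rw [funkG_formula n x Z X hx1 hZ0 (1+r) (-(1-r)) hq hT, hxn, hXdef, hnsm, ← hXdef, hiXX]
      have h1r : ((1:ℝ)+r) ≠ 0 := by linarith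
      field_simp
      ring
    apply hc
    refine ⟨x, X, X, Z, le_of_eq hxn, hX0, hX0, hZ0, hFX, hFX, hFZ, ?_⟩
    rw [hgX, hgZ]
    have hdpos : (0:ℝ) < ((1-r)/(1+r))^2 := by
      apply pow_pos; apply div_pos <;> linarith
    rw [eq_div_iff hdpos.ne']
    field_simp
    have h2 : ((1:ℝ)-r)^2*((1:ℝ)+r)^2 ≠ 0 := by
      apply ne_of_gt; apply mul_pos <;> (apply pow_pos; linarith)
    rw [div_self (by linarith : (1:ℝ)-r ≠ 0)]
end

section
/- Let n ≥ 2, let F be the Funk metric on the open unit ball of ℝⁿ, and let 0 < r < 1. For p, q in the closed ball {|x| ≤ r}, define the (nonsymmetric) Funk distance d(p,q) as the infimum of ∫₀¹ F(γ(t), γ′(t)) dt over all piecewise C¹ curves γ : [0,1] → {|x| ≤ r} with γ(0) = p and γ(1) = q. Then the diameter sup_{|p| ≤ r, |q| ≤ r} d(p,q) equals log((1+r)/(1−r)). -/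
open MeasureTheory

/-- `γ : ℝ → E` is piecewise `C¹` on `[0,1]`: there is a finite partition
`0 = τ₀ < τ₁ < ⋯ < τ_k = 1` such that `γ` is `C¹` on each `[τᵢ, τᵢ₊₁]`. -/
def PiecewiseC1 {E : Type*} [NormedAddCommGroup E] [NormedSpace ℝ E] (γ : ℝ → E) : Prop :=
  ∃ (k : ℕ) (τ : ℕ → ℝ), 0 < k ∧ τ 0 = 0 ∧ τ k = 1 ∧
    (∀ i < k, τ i < τ (i + 1)) ∧
    ∀ i < k, ContDiffOn ℝ 1 γ (Set.Icc (τ i) (τ (i + 1)))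

/-- The (nonsymmetric) Funk distance on the closed ball of radius `r`: the infimum of
`∫₀¹ F(γ(t), γ′(t)) dt` over piecewise `C¹` curves in `{|x| ≤ r}` from `p` to `q`. -/
noncomputable def funkDist (n : ℕ) (r : ℝ) (p q : EuclideanSpace ℝ (Fin n)) : ℝ :=
  sInf { L : ℝ | ∃ γ : ℝ → EuclideanSpace ℝ (Fin n), PiecewiseC1 γ ∧
    (∀ t ∈ Set.Icc (0 : ℝ) 1, ‖γ t‖ ≤ r) ∧ γ 0 = p ∧ γ 1 = q ∧
    L = ∫ t in (0:ℝ)..1, funk n (γ t) (deriv γ t) }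

section Aux

lemma funk_nonneg (n : ℕ) (x y : EuclideanSpace ℝ (Fin n)) (hx : ‖x‖ < 1) :
    0 ≤ funk n x y := by
  have hX : 0 < 1 - ‖x‖ ^ 2 := by nlinarith [norm_nonneg x]
  apply div_nonneg _ hX.le
  have h1 : |(inner ℝ x y : ℝ)| ≤ Real.sqrt ((1 - ‖x‖ ^ 2) * ‖y‖ ^ 2 + (inner ℝ x y : ℝ) ^ 2) := by
    rw [← Real.sqrt_sq_eq_abs]
    apply Real.sqrt_le_sqrt
    nlinarith [sq_nonneg ‖y‖, hX.le]
  have := neg_abs_le (inner ℝ x y : ℝ)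
  linarith

lemma funk_le (n : ℕ) (x y : EuclideanSpace ℝ (Fin n)) (s : ℝ) (hs : 0 < s)
    (hx : ‖x‖ < 1) (h : ‖x + s • y‖ ≤ 1) : funk n x y ≤ 1 / s := by
  have hX : 0 < 1 - ‖x‖ ^ 2 := by nlinarith [norm_nonneg x]
  set P : ℝ := (inner ℝ x y : ℝ) with hP
  set X : ℝ := ‖x‖ ^ 2 with hXdef
  have hexp : ‖x + s • y‖ ^ 2 = X + 2 * s * P + s ^ 2 * ‖y‖ ^ 2 := by
    rw [norm_add_sq_real, real_inner_smul_right, norm_smul, Real.norm_eq_abs,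
      abs_of_pos hs, mul_pow]
    ring
  have hkey : s ^ 2 * ‖y‖ ^ 2 + 2 * s * P ≤ 1 - X := by
    nlinarith [h, norm_nonneg (x + s • y)]
  have hc : 0 ≤ (1 - X) / s - P := by
    rw [sub_nonneg, le_div_iff₀ hs]
    nlinarith [sq_nonneg (s * ‖y‖)]
  have hsqrt : Real.sqrt ((1 - X) * ‖y‖ ^ 2 + P ^ 2) ≤ (1 - X) / s - P := by
    rw [show ((1-X)/s - P) = Real.sqrt (((1-X)/s - P)^2) by rw [Real.sqrt_sq hc]]
    apply Real.sqrt_le_sqrt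
    have h2 : ((1 - X) / s - P) ^ 2 = (1-X)^2/s^2 - 2*(1-X)*P/s + P^2 := by
      field_simp; ring
    rw [h2]
    have h3 : (1-X)^2/s^2 - 2*(1-X)*P/s + P^2 - ((1 - X) * ‖y‖ ^ 2 + P ^ 2)
        = (1-X)/s^2 * ((1-X) - 2*s*P - s^2*‖y‖^2) := by field_simp; ring
    have h4 : 0 ≤ (1-X)/s^2 * ((1-X) - 2*s*P - s^2*‖y‖^2) :=
      mul_nonneg (by positivity) (by linarith)
    linarith
  show (Real.sqrt ((1 - X) * ‖y‖ ^ 2 + P ^ 2) + P) / (1 - X) ≤ 1 / s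
  rw [div_le_div_iff₀ hX hs]
  have h5 : Real.sqrt ((1 - X) * ‖y‖ ^ 2 + P ^ 2) + P ≤ (1 - X) / s := by linarith
  calc (Real.sqrt ((1 - X) * ‖y‖ ^ 2 + P ^ 2) + P) * s ≤ ((1-X)/s) * s :=
        mul_le_mul_of_nonneg_right h5 hs.le
    _ = 1 * (1 - X) := by field_simp

lemma funk_ge (n : ℕ) (u x y : EuclideanSpace ℝ (Fin n)) (hu : ‖u‖ = 1) (hx : ‖x‖ < 1) :
    (inner ℝ u y : ℝ) / (1 - (inner ℝ u x : ℝ)) ≤ funk n x y := by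
  have hX : 0 < 1 - ‖x‖ ^ 2 := by nlinarith [norm_nonneg x]
  set a : ℝ := (inner ℝ u x : ℝ) with ha
  set b : ℝ := (inner ℝ u y : ℝ) with hb
  have hax : |a| ≤ ‖x‖ := by
    have := abs_real_inner_le_norm u x
    rwa [hu, one_mul] at this
  have ha1 : 0 < 1 - a := by
    have := le_abs_self a
    linarith [lt_of_le_of_lt (this.trans hax) hx]
  rcases le_or_gt b 0 with hb0 | hb0
  · exact le_trans (div_nonpos_of_nonpos_of_nonneg hb0 ha1.le) (funk_nonneg n x y hx)
  set z := x - a • u with hz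
  set w := y - b • u with hw
  have hxu : (inner ℝ x u : ℝ) = a := by rw [ha, real_inner_comm]
  have hyu : (inner ℝ y u : ℝ) = b := by rw [hb, real_inner_comm]
  have huu : (inner ℝ u u : ℝ) = 1 := by
    rw [real_inner_self_eq_norm_sq, hu, one_pow]
  have hzn : ‖z‖ ^ 2 = ‖x‖ ^ 2 - a ^ 2 := by
    rw [hz, norm_sub_sq_real, real_inner_smul_right, hxu, norm_smul, Real.norm_eq_abs,
      mul_pow, sq_abs, hu]
    ring
  have hwn : ‖w‖ ^ 2 = ‖y‖ ^ 2 - b ^ 2 := by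
    rw [hw, norm_sub_sq_real, real_inner_smul_right, hyu, norm_smul, Real.norm_eq_abs,
      mul_pow, sq_abs, hu]
    ring
  have hzw : (inner ℝ z w : ℝ) = (inner ℝ x y : ℝ) - a * b := by
    simp only [hz, hw, inner_sub_left, inner_sub_right, real_inner_smul_left,
      real_inner_smul_right, hxu, huu, ← hb, ← ha]
    ring
  have hcs : -(‖z‖ * ‖w‖) ≤ (inner ℝ z w : ℝ) := by
    have := abs_real_inner_le_norm z w
    linarith [neg_abs_le (inner ℝ z w : ℝ)]
  set P : ℝ := (inner ℝ x y : ℝ) with hP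
  have hy2 : ‖y‖^2 = b^2 + ‖w‖^2 := by linarith
  have hx2 : ‖x‖^2 = a^2 + ‖z‖^2 := by linarith
  have hPe : P = a*b + (inner ℝ z w : ℝ) := by rw [hzw]; ring
  have hkey : (1 - ‖x‖^2) * b^2 ≤ (1-a)^2 * ‖y‖^2 + 2*b*(1-a)*P := by
    rw [hy2, hx2, hPe]
    nlinarith [sq_nonneg ((1-a)*‖w‖ - b*‖z‖),
      mul_nonneg (mul_nonneg (by linarith : (0:ℝ) ≤ 2*b) ha1.le)
        (by linarith : 0 ≤ (inner ℝ z w : ℝ) + ‖z‖*‖w‖)]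
  have hsqrt : (1 - ‖x‖^2) * b / (1-a) - P ≤ Real.sqrt ((1 - ‖x‖ ^ 2) * ‖y‖ ^ 2 + P ^ 2) := by
    rcases le_or_gt ((1 - ‖x‖^2) * b / (1-a) - P) 0 with hc | hc
    · exact hc.trans (Real.sqrt_nonneg _)
    · rw [show ((1 - ‖x‖^2) * b / (1-a) - P) = Real.sqrt (((1 - ‖x‖^2) * b / (1-a) - P)^2) by
        rw [Real.sqrt_sq hc.le]]
      apply Real.sqrt_le_sqrt
      have hexp : ((1 - ‖x‖^2) * b / (1-a) - P)^2
          = (1-‖x‖^2)^2*b^2/(1-a)^2 - 2*(1-‖x‖^2)*b*P/(1-a) + P^2 := by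
        field_simp; ring
      rw [hexp]
      have h3 : (1 - ‖x‖ ^ 2) * ‖y‖ ^ 2 + P ^ 2
            - ((1-‖x‖^2)^2*b^2/(1-a)^2 - 2*(1-‖x‖^2)*b*P/(1-a) + P^2)
          = (1-‖x‖^2)/(1-a)^2 * ((1-a)^2*‖y‖^2 + 2*b*(1-a)*P - (1-‖x‖^2)*b^2) := by
        field_simp; ring
      have h4 : 0 ≤ (1-‖x‖^2)/(1-a)^2 * ((1-a)^2*‖y‖^2 + 2*b*(1-a)*P - (1-‖x‖^2)*b^2) :=
        mul_nonneg (by positivity) (by linarith)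
      linarith
  show b / (1-a) ≤ (Real.sqrt ((1 - ‖x‖ ^ 2) * ‖y‖ ^ 2 + P ^ 2) + P) / (1 - ‖x‖^2)
  rw [div_le_div_iff₀ ha1 hX]
  have h5 : (1 - ‖x‖^2) * b / (1-a) ≤ Real.sqrt ((1 - ‖x‖ ^ 2) * ‖y‖ ^ 2 + P ^ 2) + P := by
    linarith
  calc b * (1 - ‖x‖^2) = ((1 - ‖x‖^2) * b / (1-a)) * (1-a) := by field_simp
    _ ≤ (Real.sqrt ((1 - ‖x‖ ^ 2) * ‖y‖ ^ 2 + P ^ 2) + P) * (1-a) :=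
        mul_le_mul_of_nonneg_right h5 ha1.le

lemma funk_contOn {n : ℕ} {γ δ : ℝ → EuclideanSpace ℝ (Fin n)} {s : Set ℝ}
    (hγ : ContinuousOn γ s) (hδ : ContinuousOn δ s) (hb : ∀ t ∈ s, ‖γ t‖ < 1) :
    ContinuousOn (fun t => funk n (γ t) (δ t)) s := by
  apply ContinuousOn.div
  · apply ContinuousOn.add
    · apply ContinuousOn.sqrt
      apply ContinuousOn.add
      · exact (ContinuousOn.sub continuousOn_const ((hγ.norm).pow 2)).mul ((hδ.norm).pow 2)
      · exact (hγ.inner (𝕜 := ℝ) hδ).pow 2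
    · exact hγ.inner (𝕜 := ℝ) hδ
  · exact ContinuousOn.sub continuousOn_const ((hγ.norm).pow 2)
  · intro t ht
    have := hb t ht
    nlinarith [norm_nonneg (γ t)]

lemma segment_norm_le {n : ℕ} {r : ℝ} {p q : EuclideanSpace ℝ (Fin n)}
    (hp : ‖p‖ ≤ r) (hq : ‖q‖ ≤ r) {t : ℝ} (ht0 : 0 ≤ t) (ht1 : t ≤ 1) :
    ‖p + t • (q - p)‖ ≤ r := by
  have h : p + t • (q - p) = (1 - t) • p + t • q := by
    rw [smul_sub, sub_smul, one_smul]; abel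
  rw [h]
  calc ‖(1 - t) • p + t • q‖ ≤ ‖(1-t) • p‖ + ‖t • q‖ := norm_add_le _ _
    _ = (1-t) * ‖p‖ + t * ‖q‖ := by
        rw [norm_smul, norm_smul, Real.norm_eq_abs, Real.norm_eq_abs,
          abs_of_nonneg (by linarith), abs_of_nonneg ht0]
    _ ≤ (1-t) * r + t * r := by
        apply add_le_add (mul_le_mul_of_nonneg_left hp (by linarith))
          (mul_le_mul_of_nonneg_left hq ht0)
    _ = r := by ring

lemma integral_inv_T_sub (T : ℝ) (hT : 1 < T) :
    ∫ t in (0:ℝ)..1, (T - t)⁻¹ = Real.log T - Real.log (T - 1) := by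
  have h : ∀ t ∈ Set.uIcc (0:ℝ) 1, HasDerivAt (fun t => -Real.log (T - t)) ((T - t)⁻¹) t := by
    intro t ht
    rw [Set.uIcc_of_le (by norm_num : (0:ℝ) ≤ 1)] at ht
    have hpos : 0 < T - t := by linarith [ht.2]
    have h1 : HasDerivAt (fun t : ℝ => T - t) (-1) t := (hasDerivAt_id t).const_sub T
    have h2 := (Real.hasDerivAt_log hpos.ne').comp t h1
    have h3 := h2.neg
    have h4 : -((T - t)⁻¹ * -1) = (T - t)⁻¹ := by ring
    rw [h4] at h3
    exact h3
  have hint : IntervalIntegrable (fun t => (T - t)⁻¹) volume 0 1 := by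
    apply ContinuousOn.intervalIntegrable
    apply ContinuousOn.inv₀
    · exact (continuousOn_const.sub continuousOn_id)
    · intro t ht
      rw [Set.uIcc_of_le (by norm_num : (0:ℝ) ≤ 1)] at ht
      have : 0 < T - t := by linarith [ht.2]
      exact this.ne'
  rw [intervalIntegral.integral_eq_sub_of_hasDerivAt h hint]
  ring_nf

/-- The straight line from `p` to `q` witnesses `funkDist ≤ log((1+r)/(1-r))`. -/
lemma line_length_le (n : ℕ) (r : ℝ) (hr0 : 0 < r) (hr1 : r < 1)
    (p q : EuclideanSpace ℝ (Fin n)) (hp : ‖p‖ ≤ r) (hq : ‖q‖ ≤ r) :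
    ∃ L, (∃ γ : ℝ → EuclideanSpace ℝ (Fin n), PiecewiseC1 γ ∧
      (∀ t ∈ Set.Icc (0 : ℝ) 1, ‖γ t‖ ≤ r) ∧ γ 0 = p ∧ γ 1 = q ∧
      L = ∫ t in (0:ℝ)..1, funk n (γ t) (deriv γ t)) ∧ L ≤ Real.log ((1+r)/(1-r)) := by
  set v := q - p with hv
  set γ : ℝ → EuclideanSpace ℝ (Fin n) := fun t => p + t • v with hγ
  have hderiv : ∀ t : ℝ, HasDerivAt γ v t := fun t => by
    simpa [hγ] using ((hasDerivAt_id t).smul_const v).const_add p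
  have hderiv' : ∀ t : ℝ, deriv γ t = v := fun t => (hderiv t).deriv
  set T : ℝ := (1 + r) / (2 * r) with hT
  have hT1 : 1 < T := by
    rw [hT, lt_div_iff₀ (by linarith)]; linarith
  have hball : ∀ t ∈ Set.Icc (0:ℝ) 1, ‖γ t‖ ≤ r := fun t ht =>
    segment_norm_le hp hq ht.1 ht.2
  have hpt : ∀ t ∈ Set.Icc (0:ℝ) 1, funk n (γ t) v ≤ (T - t)⁻¹ := by
    intro t ht
    have hs : 0 < T - t := by linarith [ht.2]
    have hx1 : ‖γ t‖ < 1 := lt_of_le_of_lt (hball t ht) hr1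
    have hend : ‖γ t + (T - t) • v‖ ≤ 1 := by
      have he : γ t + (T - t) • v = (1 - T) • p + T • q := by
        rw [hγ]
        show p + t • v + (T - t) • v = _
        rw [hv]
        module
      rw [he]
      calc ‖(1 - T) • p + T • q‖ ≤ ‖(1-T) • p‖ + ‖T • q‖ := norm_add_le _ _
        _ = (T - 1) * ‖p‖ + T * ‖q‖ := by
            rw [norm_smul, norm_smul, Real.norm_eq_abs, Real.norm_eq_abs,
              abs_of_nonpos (by linarith), abs_of_nonneg (by linarith)]
            ring_nf
        _ ≤ (T - 1) * r + T * r := add_le_add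
            (mul_le_mul_of_nonneg_left hp (by linarith))
            (mul_le_mul_of_nonneg_left hq (by linarith))
        _ = (2 * T - 1) * r := by ring
        _ = 1 := by
            have hTr : T * r = (1+r)/2 := by rw [hT]; field_simp
            nlinarith [hTr]
    have := funk_le n (γ t) v (T - t) hs hx1 hend
    rwa [one_div] at this
  have hint1 : IntervalIntegrable (fun t => funk n (γ t) v) volume 0 1 := by
    apply ContinuousOn.intervalIntegrable
    rw [Set.uIcc_of_le (by norm_num : (0:ℝ) ≤ 1)]
    apply funk_contOn _ continuousOn_const
    · intro t ht; exact lt_of_le_of_lt (hball t ht) hr1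
    · exact (Continuous.continuousOn (by continuity))
  have hint2 : IntervalIntegrable (fun t => (T - t)⁻¹) volume 0 1 := by
    apply ContinuousOn.intervalIntegrable
    apply ContinuousOn.inv₀ (continuousOn_const.sub continuousOn_id)
    intro t ht
    rw [Set.uIcc_of_le (by norm_num : (0:ℝ) ≤ 1)] at ht
    have : 0 < T - t := by linarith [ht.2]
    exact this.ne'
  refine ⟨_, ⟨γ, ⟨1, fun i => (i : ℝ), by norm_num, by norm_num, by norm_num,
    by intro i hi; interval_cases i; norm_num,
    by intro i hi; interval_cases i
       apply ContDiff.contDiffOn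
       exact contDiff_const.add (contDiff_id.smul contDiff_const)⟩,
    hball, by simp [hγ], by simp [hγ, hv], rfl⟩, ?_⟩
  have heq : ∫ t in (0:ℝ)..1, funk n (γ t) (deriv γ t) = ∫ t in (0:ℝ)..1, funk n (γ t) v := by
    apply intervalIntegral.integral_congr
    intro t _; simp only [hderiv']
  rw [heq]
  calc ∫ t in (0:ℝ)..1, funk n (γ t) v ≤ ∫ t in (0:ℝ)..1, (T - t)⁻¹ := by
        apply intervalIntegral.integral_mono_on (by norm_num) hint1 hint2
        intro t ht; exact hpt t ht
    _ = Real.log T - Real.log (T - 1) := integral_inv_T_sub T hT1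
    _ = Real.log ((1+r)/(1-r)) := by
        rw [← Real.log_div (by linarith) (by linarith)]
        congr 1
        rw [hT]
        field_simp
        ring

lemma intervalIntegrable_of_eqOn_Ioo {f h : ℝ → ℝ} {a b : ℝ} (hab : a < b)
    (hc : ContinuousOn h (Set.Icc a b)) (heq : ∀ t ∈ Set.Ioo a b, h t = f t) :
    IntervalIntegrable f volume a b := by
  have h1 : IntervalIntegrable h volume a b :=
    ContinuousOn.intervalIntegrable (by rwa [Set.uIcc_of_le hab.le])
  rw [intervalIntegrable_iff_integrableOn_Ioc_of_le hab.le] at h1 ⊢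
  apply h1.congr_fun_ae
  have hmem : ∀ᵐ t ∂(volume.restrict (Set.Ioc a b)), t ∈ Set.Ioo a b := by
    rw [MeasureTheory.ae_restrict_iff' measurableSet_Ioc]
    rw [MeasureTheory.ae_iff]
    apply measure_mono_null _ (Real.volume_singleton (a := b))
    intro t ht
    simp only [Set.mem_setOf_eq, not_forall] at ht
    obtain ⟨h2, h3⟩ := ht
    simp only [Set.mem_singleton_iff]
    rcases eq_or_lt_of_le h2.2 with h4 | h4
    · exact h4
    · exact absurd ⟨h2.1, h4⟩ h3
  filter_upwards [hmem] with t ht using heq t ht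

/-- Lower bound for the Funk length of a `C¹` piece, with integrability. -/
lemma piece_lower (n : ℕ) (r : ℝ) (hr1 : r < 1) (u : EuclideanSpace ℝ (Fin n)) (hu : ‖u‖ = 1)
    (γ : ℝ → EuclideanSpace ℝ (Fin n)) (a b : ℝ) (hab : a < b)
    (hC : ContDiffOn ℝ 1 γ (Set.Icc a b)) (hball : ∀ t ∈ Set.Icc a b, ‖γ t‖ ≤ r) :
    (-Real.log (1 - (inner ℝ u (γ b) : ℝ))) - (-Real.log (1 - (inner ℝ u (γ a) : ℝ)))
      ≤ ∫ t in a..b, funk n (γ t) (deriv γ t) ∧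
    IntervalIntegrable (fun t => funk n (γ t) (deriv γ t)) volume a b := by
  have hγc : ContinuousOn γ (Set.Icc a b) := hC.continuousOn
  have hlt1 : ∀ t ∈ Set.Icc a b, ‖γ t‖ < 1 := fun t ht => lt_of_le_of_lt (hball t ht) hr1
  have hiu : ∀ t ∈ Set.Icc a b, (inner ℝ u (γ t) : ℝ) < 1 := by
    intro t ht
    have h1 := abs_real_inner_le_norm u (γ t)
    rw [hu, one_mul] at h1
    linarith [le_abs_self (inner ℝ u (γ t) : ℝ), hlt1 t ht]
  have huD : UniqueDiffOn ℝ (Set.Icc a b) := uniqueDiffOn_Icc hab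
  have hdc : ContinuousOn (derivWithin γ (Set.Icc a b)) (Set.Icc a b) :=
    (hC.derivWithin huD (m := 0) le_rfl).continuousOn
  have hD : ∀ t ∈ Set.Ioo a b, HasDerivAt γ (deriv γ t) t ∧
      derivWithin γ (Set.Icc a b) t = deriv γ t := by
    intro t ht
    have hnb : Set.Icc a b ∈ nhds t := Icc_mem_nhds ht.1 ht.2
    have hda : DifferentiableAt ℝ γ t :=
      ((hC.differentiableOn one_ne_zero) t (Set.Ioo_subset_Icc_self ht)).differentiableAt hnb
    exact ⟨hda.hasDerivAt, derivWithin_of_mem_nhds hnb⟩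
  have hfi : IntervalIntegrable (fun t => funk n (γ t) (deriv γ t)) volume a b := by
    apply intervalIntegrable_of_eqOn_Ioo hab
      (funk_contOn hγc hdc hlt1)
    intro t ht
    rw [(hD t ht).2]
  set ψ : ℝ → ℝ := fun t => (inner ℝ u (deriv γ t) : ℝ) / (1 - (inner ℝ u (γ t) : ℝ)) with hψ
  have hψi : IntervalIntegrable ψ volume a b := by
    apply intervalIntegrable_of_eqOn_Ioo hab
      (h := fun t => (inner ℝ u (derivWithin γ (Set.Icc a b) t) : ℝ) / (1 - (inner ℝ u (γ t) : ℝ)))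
    · apply ContinuousOn.div (continuousOn_const.inner hdc)
        (continuousOn_const.sub (continuousOn_const.inner hγc))
      intro t ht
      have := hiu t ht; exact sub_ne_zero.mpr this.ne'
    · intro t ht
      rw [hψ]
      simp only
      rw [(hD t ht).2]
  set g : ℝ → ℝ := fun t => -Real.log (1 - (inner ℝ u (γ t) : ℝ)) with hg
  have hgc : ContinuousOn g (Set.Icc a b) := by
    apply ContinuousOn.neg
    apply ContinuousOn.log (continuousOn_const.sub (continuousOn_const.inner hγc))
    intro t ht
    have := hiu t ht; exact sub_ne_zero.mpr this.ne'
  have hgd : ∀ t ∈ Set.Ioo a b, HasDerivWithinAt g (ψ t) (Set.Ioi t) t := by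
    intro t ht
    have h1 : HasDerivAt γ (deriv γ t) t := (hD t ht).1
    have h2 : HasDerivAt (fun s => (inner ℝ u (γ s) : ℝ)) ((inner ℝ u (deriv γ t) : ℝ)) t := by
      have := (hasDerivAt_const t u).inner ℝ h1
      simpa using this
    have h3 : HasDerivAt (fun s => 1 - (inner ℝ u (γ s) : ℝ)) (-(inner ℝ u (deriv γ t) : ℝ)) t :=
      h2.const_sub 1
    have hne : (1 : ℝ) - (inner ℝ u (γ t) : ℝ) ≠ 0 := by
      have := hiu t (Set.Ioo_subset_Icc_self ht); linarith
    have h4 := (h3.log hne).neg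
    have h5 : -(-(inner ℝ u (deriv γ t) : ℝ) / (1 - (inner ℝ u (γ t) : ℝ))) = ψ t := by
      rw [hψ]; ring
    rw [h5] at h4
    exact h4.hasDerivWithinAt
  have hftc : ∫ t in a..b, ψ t = g b - g a :=
    intervalIntegral.integral_eq_sub_of_hasDeriv_right_of_le hab.le hgc hgd hψi
  constructor
  · rw [show (-Real.log (1 - (inner ℝ u (γ b) : ℝ))) - (-Real.log (1 - (inner ℝ u (γ a) : ℝ)))
      = g b - g a by rw [hg]]
    rw [← hftc]
    apply intervalIntegral.integral_mono_on hab.le hψi hfi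
    intro t ht
    exact funk_ge n u (γ t) (deriv γ t) hu (hlt1 t ht)
  · exact hfi

/-- Every admissible curve from `(-r) • u` to `r • u` has Funk length at least
`log((1+r)/(1-r))`. -/
lemma length_ge (n : ℕ) (r : ℝ) (hr0 : 0 < r) (hr1 : r < 1)
    (u : EuclideanSpace ℝ (Fin n)) (hu : ‖u‖ = 1)
    (γ : ℝ → EuclideanSpace ℝ (Fin n)) (hpc : PiecewiseC1 γ)
    (hball : ∀ t ∈ Set.Icc (0 : ℝ) 1, ‖γ t‖ ≤ r)
    (h0 : γ 0 = (-r) • u) (h1 : γ 1 = r • u) :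
    Real.log ((1+r)/(1-r)) ≤ ∫ t in (0:ℝ)..1, funk n (γ t) (deriv γ t) := by
  obtain ⟨k, τ, hk, hτ0, hτk, hlt, hC⟩ := hpc
  have hmono : ∀ i j, i ≤ j → j ≤ k → τ i ≤ τ j := by
    intro i j hij
    induction hij with
    | refl => exact fun _ => le_rfl
    | @step m hm ih =>
        exact fun h2 => le_trans (ih (by omega)) (hlt m (by omega)).le
  have hin : ∀ i, i ≤ k → τ i ∈ Set.Icc (0:ℝ) 1 := by
    intro i hi
    constructor
    · rw [← hτ0]; exact hmono 0 i (Nat.zero_le i) hi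
    · rw [← hτk]; exact hmono i k hi le_rfl
  have hsub : ∀ i, i < k → Set.Icc (τ i) (τ (i+1)) ⊆ Set.Icc (0:ℝ) 1 := by
    intro i hi t ht
    exact ⟨le_trans (hin i hi.le).1 ht.1, le_trans ht.2 (hin (i+1) hi).2⟩
  have hpiece := fun i (hi : i < k) =>
    piece_lower n r hr1 u hu γ (τ i) (τ (i+1)) (hlt i hi) (hC i hi)
      (fun t ht => hball t (hsub i hi ht))
  set g : ℝ → ℝ := fun t => -Real.log (1 - (inner ℝ u (γ t) : ℝ)) with hg
  have hsum := intervalIntegral.sum_integral_adjacent_intervals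
    (f := fun t => funk n (γ t) (deriv γ t)) (μ := volume) (a := τ) (n := k)
    (fun i hi => (hpiece i hi).2)
  rw [hτ0, hτk] at hsum
  have htel : ∑ i ∈ Finset.range k, (g (τ (i+1)) - g (τ i)) = g (τ k) - g (τ 0) :=
    Finset.sum_range_sub (fun i => g (τ i)) k
  have hle : ∑ i ∈ Finset.range k, (g (τ (i+1)) - g (τ i))
      ≤ ∑ i ∈ Finset.range k, ∫ t in (τ i)..(τ (i+1)), funk n (γ t) (deriv γ t) := by
    apply Finset.sum_le_sum
    intro i hi
    exact (hpiece i (Finset.mem_range.mp hi)).1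
  rw [htel, hτ0, hτk] at hle
  rw [← hsum]
  refine le_trans (le_of_eq ?_) hle
  -- g 1 - g 0 = log((1+r)/(1-r))
  have hup : (inner ℝ u (γ 1) : ℝ) = r := by
    rw [h1, real_inner_smul_right, real_inner_self_eq_norm_sq, hu]
    ring
  have hdown : (inner ℝ u (γ 0) : ℝ) = -r := by
    rw [h0, real_inner_smul_right, real_inner_self_eq_norm_sq, hu]
    ring
  rw [hg]
  simp only [hup, hdown]
  rw [Real.log_div (by linarith) (by linarith)]
  ring_nf

end Aux

/-- The diameter of the closed ball `{|x| ≤ r}`, `0 < r < 1`, with respect to the Funk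
distance equals `log((1+r)/(1−r))`. -/
theorem funk_diameter (n : ℕ) (hn : 2 ≤ n) (r : ℝ) (hr0 : 0 < r) (hr1 : r < 1) :
    sSup { d : ℝ | ∃ p q : EuclideanSpace ℝ (Fin n),
        ‖p‖ ≤ r ∧ ‖q‖ ≤ r ∧ d = funkDist n r p q }
      = Real.log ((1 + r) / (1 - r)) := by
  have hlog0 : 0 ≤ Real.log ((1 + r) / (1 - r)) := by
    apply Real.log_nonneg
    rw [le_div_iff₀ (by linarith)]
    linarith
  -- lengths are nonnegative
  have hLnonneg : ∀ (p q : EuclideanSpace ℝ (Fin n)), ∀ L ∈ { L : ℝ |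
      ∃ γ : ℝ → EuclideanSpace ℝ (Fin n), PiecewiseC1 γ ∧
      (∀ t ∈ Set.Icc (0 : ℝ) 1, ‖γ t‖ ≤ r) ∧ γ 0 = p ∧ γ 1 = q ∧
      L = ∫ t in (0:ℝ)..1, funk n (γ t) (deriv γ t) }, 0 ≤ L := by
    rintro p q L ⟨γ, _, hball, _, _, rfl⟩
    apply intervalIntegral.integral_nonneg (by norm_num)
    intro t ht
    exact funk_nonneg n (γ t) (deriv γ t) (lt_of_le_of_lt (hball t ht) hr1)
  -- upper bound for funkDist
  have hdistle : ∀ (p q : EuclideanSpace ℝ (Fin n)), ‖p‖ ≤ r → ‖q‖ ≤ r →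
      funkDist n r p q ≤ Real.log ((1 + r) / (1 - r)) := by
    intro p q hp hq
    obtain ⟨L, hLmem, hLle⟩ := line_length_le n r hr0 hr1 p q hp hq
    refine le_trans (csInf_le ⟨0, fun x hx => hLnonneg p q x hx⟩ hLmem) hLle
  -- the unit vector
  set u : EuclideanSpace ℝ (Fin n) := EuclideanSpace.single (⟨0, by omega⟩ : Fin n) (1:ℝ)
    with hudef
  have hu : ‖u‖ = 1 := by
    rw [hudef, EuclideanSpace.norm_single]
    norm_num
  set p₀ : EuclideanSpace ℝ (Fin n) := (-r) • u with hp₀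
  set q₀ : EuclideanSpace ℝ (Fin n) := r • u with hq₀
  have hp₀n : ‖p₀‖ ≤ r := by
    rw [hp₀, norm_smul, Real.norm_eq_abs, abs_neg, abs_of_pos hr0, hu]; simp
  have hq₀n : ‖q₀‖ ≤ r := by
    rw [hq₀, norm_smul, Real.norm_eq_abs, abs_of_pos hr0, hu]; simp
  -- funkDist p₀ q₀ = log((1+r)/(1-r))
  have hdist_eq : funkDist n r p₀ q₀ = Real.log ((1 + r) / (1 - r)) := by
    apply le_antisymm (hdistle p₀ q₀ hp₀n hq₀n)
    apply le_csInf
    · obtain ⟨L, hLmem, _⟩ := line_length_le n r hr0 hr1 p₀ q₀ hp₀n hq₀n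
      exact ⟨L, hLmem⟩
    · rintro L ⟨γ, hpc, hball, h0, h1, rfl⟩
      exact length_ge n r hr0 hr1 u hu γ hpc hball (by rw [h0, hp₀]) (by rw [h1, hq₀])
  apply le_antisymm
  · apply Real.sSup_le
    · rintro d ⟨p, q, hp, hq, rfl⟩
      exact hdistle p q hp hq
    · exact hlog0
  · apply le_csSup
    · exact ⟨Real.log ((1 + r) / (1 - r)), by rintro d ⟨p, q, hp, hq, rfl⟩; exact hdistle p q hp hq⟩
    · exact ⟨p₀, q₀, hp₀n, hq₀n, hdist_eq.symm⟩
end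

section
/- Let n ≥ 2, let F be the Funk metric on the open unit ball of ℝⁿ, and let 0 < r < 1. For x with |x| = r, set n₊(x) := −((1+r)/r)·x and n₋(x) := ((1−r)/r)·x. Then: (i) F(x, n₊(x)) = 1 and F(x, n₋(x)) = 1; (ii) g_{(x, n₊(x))}(n₊(x), v) = 0 and g_{(x, n₋(x))}(n₋(x), v) = 0 for every v ∈ ℝⁿ with x·v = 0; (iii) n₊(x)·(−x/r) = 1+r > 0 and n₋(x)·(x/r) = 1−r > 0. Hence n₊ and n₋ are, respectively, the F-unit inward and outward normal vector fields along the sphere {|x| = r} = ∂Ω_r. -/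
open Real RealInnerProductSpace

/-- Value of the Funk metric on radial vectors. -/
lemma funk_smul (n : ℕ) (x : EuclideanSpace ℝ (Fin n)) (c r : ℝ) (hr0 : 0 < r)
    (hx : ‖x‖ = r) :
    funk n x (c • x) = (|c| * r + c * r ^ 2) / (1 - r ^ 2) := by
  unfold funk
  rw [norm_smul, real_inner_smul_right, real_inner_self_eq_norm_sq, hx]
  have h1 : (1 - r ^ 2) * (‖c‖ * r) ^ 2 + (c * r ^ 2) ^ 2 = (|c| * r) ^ 2 := by
    rw [Real.norm_eq_abs, mul_pow, mul_pow, sq_abs]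
    ring
  rw [h1, Real.sqrt_sq (by positivity)]

set_option maxHeartbeats 1000000 in
/-- The key vanishing of the fundamental tensor on radial flags against tangent vectors. -/
lemma funkG_aux (n : ℕ) (x : EuclideanSpace ℝ (Fin n)) (hx1 : ‖x‖ < 1) (hx0 : x ≠ 0)
    (c : ℝ) (hc : c ≠ 0) (v : EuclideanSpace ℝ (Fin n)) (hv : (inner ℝ x v : ℝ) = 0) :
    funkG n x (c • x) (c • x) v = 0 := by
  set a : ℝ := 1 - ‖x‖ ^ 2 with ha_def
  have ha : 0 < a := by
    have : ‖x‖ ^ 2 < 1 := by nlinarith [norm_nonneg x]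
    simp only [ha_def]; linarith
  -- the rewritten squared Funk function
  have hfunk2 : (fun w : EuclideanSpace ℝ (Fin n) => funk n x w ^ 2)
      = fun w => ((Real.sqrt (a * ⟪w, w⟫ + ⟪x, w⟫ * ⟪x, w⟫) + ⟪x, w⟫) * a⁻¹) *
        ((Real.sqrt (a * ⟪w, w⟫ + ⟪x, w⟫ * ⟪x, w⟫) + ⟪x, w⟫) * a⁻¹) := by
    funext w
    simp only [funk, real_inner_self_eq_norm_sq, ha_def, pow_two, div_eq_mul_inv]
  -- positivity of the quadratic form off 0
  have hqpos : ∀ z : EuclideanSpace ℝ (Fin n), z ≠ 0 →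
      0 < a * ⟪z, z⟫ + ⟪x, z⟫ * ⟪x, z⟫ := by
    intro z hz
    have h1 : 0 < ⟪z, z⟫ := by
      rw [real_inner_self_eq_norm_sq]
      have : 0 < ‖z‖ := norm_pos_iff.mpr hz
      positivity
    nlinarith [mul_self_nonneg (⟪x, z⟫)]
  -- explicit value of the first derivative applied to v
  have step2 : ∀ z : EuclideanSpace ℝ (Fin n), z ≠ 0 →
      fderiv ℝ (fun w => funk n x w ^ 2) z v
        = 2 * (Real.sqrt (a * ⟪z, z⟫ + ⟪x, z⟫ * ⟪x, z⟫) + ⟪x, z⟫)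
            / (a * Real.sqrt (a * ⟪z, z⟫ + ⟪x, z⟫ * ⟪x, z⟫)) * ⟪z, v⟫ := by
    intro z hz
    have hq0 := hqpos z hz
    have hS : Real.sqrt (a * ⟪z, z⟫ + ⟪x, z⟫ * ⟪x, z⟫) ≠ 0 :=
      (Real.sqrt_pos.mpr hq0).ne'
    have hw : HasFDerivAt (fun w : EuclideanSpace ℝ (Fin n) => ⟪w, w⟫)
        ((fderivInnerCLM ℝ (z, z)).comp
          ((ContinuousLinearMap.id ℝ (EuclideanSpace ℝ (Fin n))).prod
            (ContinuousLinearMap.id ℝ (EuclideanSpace ℝ (Fin n))))) z :=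
      (hasFDerivAt_id z).inner ℝ (hasFDerivAt_id z)
    have hp : HasFDerivAt (fun w : EuclideanSpace ℝ (Fin n) => ⟪x, w⟫) (innerSL ℝ x) z :=
      (innerSL ℝ x).hasFDerivAt
    have hq := (hw.const_mul a).add (hp.mul hp)
    have hs := hq.sqrt hq0.ne'
    have hφ := (hs.add hp).mul_const a⁻¹
    have hF2 : HasFDerivAt (fun w : EuclideanSpace ℝ (Fin n) =>
        ((Real.sqrt (a * ⟪w, w⟫ + ⟪x, w⟫ * ⟪x, w⟫) + ⟪x, w⟫) * a⁻¹) *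
        ((Real.sqrt (a * ⟪w, w⟫ + ⟪x, w⟫ * ⟪x, w⟫) + ⟪x, w⟫) * a⁻¹)) _ z := hφ.mul hφ
    rw [hfunk2, hF2.fderiv]
    simp only [ContinuousLinearMap.add_apply, ContinuousLinearMap.smul_apply,
      ContinuousLinearMap.coe_comp', Function.comp_apply, ContinuousLinearMap.prod_apply,
      ContinuousLinearMap.coe_id', id_eq, fderivInnerCLM_apply, innerSL_apply_apply, smul_eq_mul, Pi.add_apply, Pi.mul_apply]
    rw [real_inner_comm v z, hv]
    generalize hSg : Real.sqrt (a * ⟪z, z⟫ + ⟪x, z⟫ * ⟪x, z⟫) = S at hS ⊢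
    field_simp
    ring
  -- now differentiate the explicit function at y = c • x
  set y : EuclideanSpace ℝ (Fin n) := c • x with hy_def
  have hy0 : y ≠ 0 := smul_ne_zero hc hx0
  have hEv : (fun z => fderiv ℝ (fun w => funk n x w ^ 2) z v)
      =ᶠ[nhds y] (fun z =>
        2 * (Real.sqrt (a * ⟪z, z⟫ + ⟪x, z⟫ * ⟪x, z⟫) + ⟪x, z⟫)
          / (a * Real.sqrt (a * ⟪z, z⟫ + ⟪x, z⟫ * ⟪x, z⟫)) * ⟪z, v⟫) :=
    (eventually_ne_nhds hy0).mono fun z hz => step2 z hz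
  have hq0y := hqpos y hy0
  have hSy : Real.sqrt (a * ⟪y, y⟫ + ⟪x, y⟫ * ⟪x, y⟫) ≠ 0 :=
    (Real.sqrt_pos.mpr hq0y).ne'
  -- differentiability of the scalar factor
  have hwD : DifferentiableAt ℝ (fun w : EuclideanSpace ℝ (Fin n) => ⟪w, w⟫) y :=
    (differentiableAt_fun_id).inner ℝ (differentiableAt_fun_id)
  have hpD : DifferentiableAt ℝ (fun w : EuclideanSpace ℝ (Fin n) => ⟪x, w⟫) y :=
    (innerSL ℝ x).differentiableAt
  have hqD : DifferentiableAt ℝ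
      (fun w : EuclideanSpace ℝ (Fin n) => a * ⟪w, w⟫ + ⟪x, w⟫ * ⟪x, w⟫) y :=
    ((hwD.const_mul a).add (hpD.mul hpD))
  have hsD : DifferentiableAt ℝ
      (fun w : EuclideanSpace ℝ (Fin n) =>
        Real.sqrt (a * ⟪w, w⟫ + ⟪x, w⟫ * ⟪x, w⟫)) y := hqD.sqrt hq0y.ne'
  have hhD : DifferentiableAt ℝ
      (fun z : EuclideanSpace ℝ (Fin n) =>
        2 * (Real.sqrt (a * ⟪z, z⟫ + ⟪x, z⟫ * ⟪x, z⟫) + ⟪x, z⟫)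
          / (a * Real.sqrt (a * ⟪z, z⟫ + ⟪x, z⟫ * ⟪x, z⟫))) y := by
    simp only [div_eq_mul_inv]
    exact ((hsD.add hpD).const_mul 2).mul ((hsD.const_mul a).inv (mul_ne_zero ha.ne' hSy))
  have hm : HasFDerivAt (fun z : EuclideanSpace ℝ (Fin n) => ⟪z, v⟫)
      ((fderivInnerCLM ℝ (y, v)).comp
        ((ContinuousLinearMap.id ℝ (EuclideanSpace ℝ (Fin n))).prod 0)) y :=
    (hasFDerivAt_id y).inner ℝ (hasFDerivAt_const v y)
  have hg : HasFDerivAt (fun z : EuclideanSpace ℝ (Fin n) =>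
      2 * (Real.sqrt (a * ⟪z, z⟫ + ⟪x, z⟫ * ⟪x, z⟫) + ⟪x, z⟫)
        / (a * Real.sqrt (a * ⟪z, z⟫ + ⟪x, z⟫ * ⟪x, z⟫)) * ⟪z, v⟫) _ y :=
    hhD.hasFDerivAt.mul hm
  have hyv : ⟪y, v⟫ = 0 := by
    rw [hy_def, real_inner_smul_left, hv, mul_zero]
  unfold funkG
  rw [hEv.fderiv_eq, hg.fderiv]
  simp [hyv, fderivInnerCLM_apply]

/-- For `|x| = r`, the vectors `n₊(x) = −((1+r)/r)·x` and `n₋(x) = ((1−r)/r)·x` are the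
`F`-unit inward and outward normal vectors of the sphere `{|x| = r}` for the Funk metric:
they are `F`-unit, `g`-orthogonal to the tangent space of the sphere, and point inward
(resp. outward). -/
theorem funk_normal_vectors (n : ℕ) (hn : 2 ≤ n) (r : ℝ) (hr0 : 0 < r) (hr1 : r < 1)
    (x : EuclideanSpace ℝ (Fin n)) (hx : ‖x‖ = r) :
    (funk n x (-(((1 + r) / r) • x)) = 1 ∧ funk n x (((1 - r) / r) • x) = 1) ∧
    (∀ v : EuclideanSpace ℝ (Fin n), (inner ℝ x v : ℝ) = 0 →
      funkG n x (-(((1 + r) / r) • x)) (-(((1 + r) / r) • x)) v = 0 ∧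
      funkG n x (((1 - r) / r) • x) (((1 - r) / r) • x) v = 0) ∧
    ((inner ℝ (-(((1 + r) / r) • x)) (-(r⁻¹ • x)) : ℝ) = 1 + r ∧ (0:ℝ) < 1 + r ∧
     (inner ℝ (((1 - r) / r) • x) (r⁻¹ • x) : ℝ) = 1 - r ∧ (0:ℝ) < 1 - r) := by
  have hr : r ≠ 0 := hr0.ne'
  have hr2 : (1 : ℝ) - r ^ 2 ≠ 0 := by nlinarith
  have hx1 : ‖x‖ < 1 := by rw [hx]; exact hr1
  have hx0 : x ≠ 0 := by
    intro h; rw [h, norm_zero] at hx; exact hr (hx.symm)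
  have hneg : -(((1 + r) / r) • x) = (-((1 + r) / r)) • x := by
    rw [neg_smul]
  refine ⟨⟨?_, ?_⟩, ?_, ?_⟩
  · rw [hneg, funk_smul n x _ r hr0 hx]
    rw [abs_neg, abs_of_pos (div_pos (by linarith) hr0)]
    field_simp
    ring
  · rw [funk_smul n x _ r hr0 hx]
    rw [abs_of_pos (div_pos (by linarith) hr0)]
    field_simp
    ring
  · intro v hv
    constructor
    · rw [hneg]
      exact funkG_aux n x hx1 hx0 (-((1 + r) / r))
        (neg_ne_zero.mpr (ne_of_gt (div_pos (by linarith) hr0))) v hv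
    · exact funkG_aux n x hx1 hx0 ((1 - r) / r)
        (ne_of_gt (div_pos (by linarith) hr0)) v hv
  · have hxx : ⟪x, x⟫ = r ^ 2 := by rw [real_inner_self_eq_norm_sq, hx]
    refine ⟨?_, by linarith, ?_, by linarith⟩
    · rw [inner_neg_neg, real_inner_smul_left, real_inner_smul_right, hxx]
      field_simp
      try ring
      try tauto
    · rw [real_inner_smul_left, real_inner_smul_right, hxx]
      field_simp
      try ring
      try tauto
end
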